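/- The number of digitally convex sets of the Cartesian product P_n □ P_2 satisfies n_D(P_1 □ P_2) = 2, n_D(P_2 □ P_2) = 6, n_D(P_3 □ P_2) = 16, and for every integer n ≥ 4, n_D(P_n □ P_2) = n_D(P_{n−1} □ P_2) + 3·n_D(P_{n−2} □ P_2) + 2·n_D(P_{n−3} □ P_2). -/

import Mathlib

open SimpleGraph

/-- `N[S]`: the union of closed neighbourhoods of the vertices of `S`. -/
def closedNbhd {V : Type*} (G : SimpleGraph V) (S : Set V) : Set V :=
  ⋃ v ∈ S, insert v (G.neighborSet v)

/-- A set `S` is digitally convex in `G` if every vertex `v` with `N[v] ⊆ N[S]`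
belongs to `S`. -/
def DigConvex {V : Type*} (G : SimpleGraph V) (S : Set V) : Prop :=
  ∀ v : V, insert v (G.neighborSet v) ⊆ closedNbhd G S → v ∈ S

/-- `n_D(G)`: the number of digitally convex sets of `G`. -/
noncomputable def nD {V : Type*} (G : SimpleGraph V) : ℕ :=
  Nat.card {S : Set V // DigConvex G S}

/-- The path graph `P_n` on vertices `{0, 1, …, n-1}`, with `i` adjacent to `i+1`. -/
def pathG (n : ℕ) : SimpleGraph (Fin n) :=
  SimpleGraph.fromRel (fun i j => (i : ℕ) + 1 = (j : ℕ))

namespace NDAux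

abbrev C := Fin 2 → Bool
abbrev OC := Option C
abbrev Wd := OC × OC × OC × OC
abbrev Q := Option Wd

def getb : OC → Fin 2 → Bool
  | none, _ => false
  | some d, l => d l

def isEmptyC (d : C) : Bool := !d 0 && !d 1

def freeO : OC → OC → OC → Fin 2 → Bool
  | _, none, _, _ => false
  | L, some d, R, l => isEmptyC d && !getb L l && !getb R l

def jnot : Fin 2 → Fin 2 := fun j => if j = 0 then 1 else 0

def goodj (m2 m1 : OC) (d : C) (p1 p2 : OC) (j : Fin 2) : Bool :=
  d j || freeO m2 m1 (some d) j || freeO m1 (some d) p1 j ||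
    freeO m1 (some d) p1 (jnot j) || freeO (some d) p1 p2 j

def check5 : OC → OC → OC → OC → OC → Bool
  | _, _, none, _, _ => true
  | m2, m1, some d, p1, p2 => goodj m2 m1 d p1 p2 0 && goodj m2 m1 d p1 p2 1

def dlt : Q → C → Q
  | none, _ => none
  | some (o1,o2,o3,o4), x =>
      if check5 o1 o2 o3 o4 (some x) then some (o2,o3,o4, some x) else none

def q0 : Q := some (none,none,none,none)

def acceptb : Q → Bool
  | none => false
  | some (o1,o2,o3,o4) => check5 o1 o2 o3 o4 none && check5 o2 o3 o4 none none

def run : {n : ℕ} → Q → (Fin n → C) → Q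
  | 0, q, _ => q
  | _+1, q, c => run (dlt q (c 0)) (Fin.tail c)

noncomputable def A (q : Q) (n : ℕ) : ℕ :=
  Nat.card {c : Fin n → C // acceptb (run q c) = true}

def Ac : ℕ → Q → ℕ
  | 0, q => if acceptb q then 1 else 0
  | n+1, q => ∑ x : C, Ac n (dlt q x)

lemma Ac_succ (n : ℕ) (q : Q) : Ac (n+1) q = ∑ x : C, Ac n (dlt q x) := rfl

lemma snoc_apply {n : ℕ} {α : Type*} (c : Fin n → α) (x : α) (i : Fin (n+1)) :
    (Fin.snoc c x : Fin (n+1) → α) i = if h : (i : ℕ) < n then c ⟨i, h⟩ else x := by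
  rcases i with ⟨iv, hlt⟩
  split
  · next h => exact @Fin.snoc_castSucc n (fun _ => α) x c ⟨iv, h⟩
  · next h =>
      have hiv : iv = n := by simp only [] at h; omega
      subst hiv
      exact @Fin.snoc_last _ (fun _ => α) x c

lemma tail_snoc {n : ℕ} {α : Type*} (c : Fin (n+1) → α) (x : α) :
    Fin.tail (Fin.snoc c x : Fin (n+2) → α) = (Fin.snoc (Fin.tail c) x : Fin (n+1) → α) := by
  funext i
  simp only [Fin.tail, snoc_apply]
  rcases i with ⟨iv, hi⟩
  by_cases h : iv < n
  · rw [dif_pos (by simpa using Nat.succ_lt_succ h), dif_pos h]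
    rfl
  · rw [dif_neg (by simpa using fun hh => h (Nat.lt_of_succ_lt_succ hh)), dif_neg h]

lemma run_succ {n : ℕ} (q : Q) (c : Fin (n+1) → C) :
    run q c = run (dlt q (c 0)) (Fin.tail c) := rfl

lemma run_snoc : ∀ {n : ℕ} (q : Q) (c : Fin n → C) (x : C),
    run q (Fin.snoc c x) = dlt (run q c) x := by
  intro n
  induction n with
  | zero => intro q c x; simp [run, Fin.snoc]
  | succ n ih =>
      intro q c x
      rw [run_succ]
      have h0 : (Fin.snoc c x : Fin (n+2) → C) 0 = c 0 := by
        have h : (0 : Fin (n+2)) = Fin.castSucc 0 := rfl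
        rw [h, Fin.snoc_castSucc]
      rw [h0, tail_snoc, ih]
      rfl

lemma A_eq : ∀ (n : ℕ) (q : Q), A q n = Ac n q := by
  intro n
  induction n with
  | zero =>
      intro q
      have hAc : Ac 0 q = if acceptb q = true then 1 else 0 := rfl
      rw [hAc]
      unfold A
      by_cases h : acceptb q = true
      · rw [if_pos h]
        have e : {c : Fin 0 → C // acceptb (run q c) = true} ≃ (Fin 0 → C) :=
          Equiv.subtypeUnivEquiv (fun c => by rw [show run q c = q from rfl]; exact h)
        rw [Nat.card_congr e]
        simp [Nat.card_eq_fintype_card]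
      · rw [if_neg h]
        have : IsEmpty {c : Fin 0 → C // acceptb (run q c) = true} := by
          constructor; rintro ⟨c, hc⟩
          rw [show run q c = q from rfl] at hc
          exact h hc
        exact Nat.card_of_isEmpty
  | succ n ih =>
      intro q
      unfold A
      have e : {c : Fin (n+1) → C // acceptb (run q c) = true} ≃
          Σ x : C, {c' : Fin n → C // acceptb (run (dlt q x) c') = true} := by
        refine ⟨fun c => ⟨c.1 0, ⟨Fin.tail c.1, c.2⟩⟩,
                fun p => ⟨Fin.cons p.1 p.2.1, ?_⟩, ?_, ?_⟩
        · have h : run q (Fin.cons p.1 p.2.1) = run (dlt q p.1) p.2.1 := by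
            rw [run_succ]; simp
          rw [h]; exact p.2.2
        · rintro ⟨c, hc⟩; apply Subtype.ext; exact Fin.cons_self_tail c
        · rintro ⟨x, c', hc⟩
          refine Sigma.ext (by simp) ?_
          simp only [Fin.cons_zero]
          apply heq_of_eq
          apply Subtype.ext
          simp
      rw [Nat.card_congr e]
      classical
      rw [Nat.card_eq_fintype_card, Fintype.card_sigma]
      have h : ∀ x : C, Fintype.card {c' : Fin n → C // acceptb (run (dlt q x) c') = true}
          = Ac n (dlt q x) := by
        intro x
        rw [← Nat.card_eq_fintype_card]
        exact ih (dlt q x)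
      rw [Ac_succ]
      simp [h]

lemma Ac_none : ∀ n, Ac n none = 0 := by
  intro n
  induction n with
  | zero => rfl
  | succ n ih => rw [Ac_succ]; simp [dlt, ih]

set_option maxHeartbeats 8000000 in
lemma base : ∀ (o2 o3 o4 : OC) (x : C),
    Ac 3 (some (o2,o3,o4,some x)) = Ac 2 (some (o2,o3,o4,some x))
      + 3 * Ac 1 (some (o2,o3,o4,some x)) + 2 * Ac 0 (some (o2,o3,o4,some x)) := by decide

lemma key (q : Q) (x : C) :
    Ac 3 (dlt q x) = Ac 2 (dlt q x) + 3 * Ac 1 (dlt q x) + 2 * Ac 0 (dlt q x) := by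
  match q with
  | none => simp [dlt, Ac_none]
  | some (o1,o2,o3,o4) =>
      show Ac 3 (dlt (some (o1,o2,o3,o4)) x) = _
      rw [dlt]
      split
      · exact base o2 o3 o4 x
      · simp [Ac_none]

lemma rec4 : ∀ (n : ℕ) (q : Q),
    Ac (n+4) q = Ac (n+3) q + 3 * Ac (n+2) q + 2 * Ac (n+1) q := by
  intro n
  induction n with
  | zero =>
      intro q
      show Ac (3+1) q = Ac (2+1) q + 3 * Ac (1+1) q + 2 * Ac (0+1) q
      rw [Ac_succ, Ac_succ, Ac_succ, Ac_succ, Finset.mul_sum, Finset.mul_sum,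
        ← Finset.sum_add_distrib, ← Finset.sum_add_distrib]
      exact Finset.sum_congr rfl (fun x _ => key q x)
  | succ n ih =>
      intro q
      show Ac (n+4+1) q = Ac (n+3+1) q + 3 * Ac (n+2+1) q + 2 * Ac (n+1+1) q
      rw [Ac_succ, Ac_succ, Ac_succ, Ac_succ, Finset.mul_sum, Finset.mul_sum,
        ← Finset.sum_add_distrib, ← Finset.sum_add_distrib]
      exact Finset.sum_congr rfl (fun x _ => ih (dlt q x))

def g (n : ℕ) (c : Fin n → C) (k : ℤ) : OC :=
  if h : 0 ≤ k ∧ k < (n : ℤ) then some (c ⟨k.toNat, by omega⟩) else none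

def condZ (n : ℕ) (c : Fin n → C) (k : ℤ) : Bool :=
  check5 (g n c (k-2)) (g n c (k-1)) (g n c k) (g n c (k+1)) (g n c (k+2))

lemma g_none (n : ℕ) (c : Fin n → C) {k : ℤ} (h : k < 0 ∨ (n:ℤ) ≤ k) :
    g n c k = none := dif_neg (by omega)

lemma g_coe (n : ℕ) (c : Fin n → C) (k : Fin n) :
    g n c ((k : ℕ) : ℤ) = some (c k) := by
  have hk : (0 : ℤ) ≤ ((k:ℕ):ℤ) ∧ ((k:ℕ):ℤ) < (n:ℤ) :=
    ⟨Int.natCast_nonneg _, by exact_mod_cast k.isLt⟩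
  rw [g, dif_pos hk]
  congr 1

lemma check5_none_center (m2 m1 p1 p2 : OC) : check5 m2 m1 none p1 p2 = true := rfl

lemma condZ_out (n : ℕ) (c : Fin n → C) {k : ℤ} (h : k < 0 ∨ (n:ℤ) ≤ k) :
    condZ n c k = true := by
  unfold condZ
  rw [g_none n c h]
  exact check5_none_center _ _ _ _

lemma g_snoc_lt {n : ℕ} (c : Fin n → C) (x : C) {k : ℤ} (hk : k < (n:ℤ)) :
    g (n+1) (Fin.snoc c x) k = g n c k := by
  unfold g
  by_cases h0 : 0 ≤ k
  · rw [dif_pos ⟨h0, by push_cast; omega⟩, dif_pos ⟨h0, hk⟩]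
    congr 1
    rw [snoc_apply]
    rw [dif_pos (by omega : k.toNat < n)]
  · rw [dif_neg (by omega), dif_neg (by omega)]

lemma g_snoc_last {n : ℕ} (c : Fin n → C) (x : C) :
    g (n+1) (Fin.snoc c x) ((n:ℕ) : ℤ) = some x := by
  unfold g
  rw [dif_pos ⟨Int.natCast_nonneg _, by push_cast; omega⟩]
  congr 1
  rw [snoc_apply]
  rw [dif_neg (by omega : ¬(((n:ℕ):ℤ).toNat < n))]

lemma condZ_snoc {n : ℕ} (c : Fin n → C) (x : C) {k : ℤ} (hk : k + 2 < (n:ℤ)) :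
    condZ (n+1) (Fin.snoc c x) k = condZ n c k := by
  unfold condZ
  rw [g_snoc_lt c x (by omega), g_snoc_lt c x (by omega), g_snoc_lt c x (by omega),
    g_snoc_lt c x (by omega), g_snoc_lt c x (by omega)]

open Classical in
lemma run_inv : ∀ (n : ℕ) (c : Fin n → C),
    run q0 c = if (∀ k : ℤ, k ≤ (n:ℤ) - 3 → condZ n c k = true)
      then some (g n c ((n:ℤ)-4), g n c ((n:ℤ)-3), g n c ((n:ℤ)-2), g n c ((n:ℤ)-1)) else none := by
  intro n
  induction n with
  | zero =>
      intro c
      rw [if_pos (fun k _ => condZ_out 0 c (by omega))]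
      show q0 = _
      unfold q0
      rw [g_none 0 c (by omega), g_none 0 c (by omega), g_none 0 c (by omega),
        g_none 0 c (by omega)]
  | succ n ih =>
      intro c
      rw [← Fin.snoc_init_self c]
      set c' := Fin.init c with hc'
      set x := c (Fin.last n) with hx
      rw [run_snoc, ih c']
      by_cases hP : ∀ k : ℤ, k ≤ (n:ℤ) - 3 → condZ n c' k = true
      · rw [if_pos hP]
        have hδ : dlt (some (g n c' ((n:ℤ)-4), g n c' ((n:ℤ)-3), g n c' ((n:ℤ)-2), g n c' ((n:ℤ)-1))) x
            = if check5 (g n c' ((n:ℤ)-4)) (g n c' ((n:ℤ)-3)) (g n c' ((n:ℤ)-2)) (g n c' ((n:ℤ)-1)) (some x)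
              then some (g n c' ((n:ℤ)-3), g n c' ((n:ℤ)-2), g n c' ((n:ℤ)-1), some x) else none := rfl
        rw [hδ]
        have hch : check5 (g n c' ((n:ℤ)-4)) (g n c' ((n:ℤ)-3)) (g n c' ((n:ℤ)-2)) (g n c' ((n:ℤ)-1)) (some x)
            = condZ (n+1) (Fin.snoc c' x) ((n:ℤ)-2) := by
          unfold condZ
          rw [show (n:ℤ)-2-2 = (n:ℤ)-4 by ring, show (n:ℤ)-2-1 = (n:ℤ)-3 by ring,
            show (n:ℤ)-2+1 = (n:ℤ)-1 by ring, show (n:ℤ)-2+2 = (n:ℤ) by ring]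
          rw [g_snoc_lt c' x (by omega), g_snoc_lt c' x (by omega), g_snoc_lt c' x (by omega),
            g_snoc_lt c' x (by omega), g_snoc_last c' x]
        rw [hch]
        by_cases hc : condZ (n+1) (Fin.snoc c' x) ((n:ℤ)-2) = true
        · rw [if_pos hc]
          have hP' : ∀ k : ℤ, k ≤ ((n+1:ℕ):ℤ) - 3 → condZ (n+1) (Fin.snoc c' x) k = true := by
            intro k hk
            by_cases hk3 : k ≤ (n:ℤ) - 3
            · rw [condZ_snoc c' x (by omega)]
              exact hP k hk3
            · have hkk : k = (n:ℤ) - 2 := by push_cast at hk; omega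
              rw [hkk]; exact hc
          rw [if_pos hP']
          have e1 : ((n+1:ℕ):ℤ) - 4 = (n:ℤ) - 3 := by push_cast; ring
          have e2 : ((n+1:ℕ):ℤ) - 3 = (n:ℤ) - 2 := by push_cast; ring
          have e3 : ((n+1:ℕ):ℤ) - 2 = (n:ℤ) - 1 := by push_cast; ring
          have e4 : ((n+1:ℕ):ℤ) - 1 = (n:ℤ) := by push_cast; ring
          rw [e1, e2, e3, e4, g_snoc_lt c' x (by omega), g_snoc_lt c' x (by omega),
            g_snoc_lt c' x (by omega), g_snoc_last c' x]
        · rw [if_neg hc, if_neg]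
          intro hP'
          exact hc (hP' ((n:ℤ)-2) (by push_cast; omega))
      · rw [if_neg hP]
        show (none : Q) = _
        rw [if_neg]
        intro hP'
        apply hP
        intro k hk
        rw [← condZ_snoc c' x (by omega : k + 2 < (n:ℤ))]
        exact hP' k (by push_cast; omega)

lemma accept_iff (n : ℕ) (c : Fin n → C) :
    acceptb (run q0 c) = true ↔ (∀ k : ℤ, condZ n c k = true) := by
  rw [run_inv]
  by_cases hP : ∀ k : ℤ, k ≤ (n:ℤ) - 3 → condZ n c k = true
  · rw [if_pos hP]
    have hacc : acceptb (some (g n c ((n:ℤ)-4), g n c ((n:ℤ)-3), g n c ((n:ℤ)-2), g n c ((n:ℤ)-1)))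
        = (condZ n c ((n:ℤ)-2) && condZ n c ((n:ℤ)-1)) := by
      show (check5 (g n c ((n:ℤ)-4)) (g n c ((n:ℤ)-3)) (g n c ((n:ℤ)-2)) (g n c ((n:ℤ)-1)) none
          && check5 (g n c ((n:ℤ)-3)) (g n c ((n:ℤ)-2)) (g n c ((n:ℤ)-1)) none none) = _
      have h1 : condZ n c ((n:ℤ)-2)
          = check5 (g n c ((n:ℤ)-4)) (g n c ((n:ℤ)-3)) (g n c ((n:ℤ)-2)) (g n c ((n:ℤ)-1)) none := by
        unfold condZ
        rw [show (n:ℤ)-2-2 = (n:ℤ)-4 by ring, show (n:ℤ)-2-1 = (n:ℤ)-3 by ring,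
          show (n:ℤ)-2+1 = (n:ℤ)-1 by ring, show (n:ℤ)-2+2 = (n:ℤ) by ring,
          g_none n c (by omega : (n:ℤ) < 0 ∨ (n:ℤ) ≤ (n:ℤ))]
      have h2 : condZ n c ((n:ℤ)-1)
          = check5 (g n c ((n:ℤ)-3)) (g n c ((n:ℤ)-2)) (g n c ((n:ℤ)-1)) none none := by
        unfold condZ
        rw [show (n:ℤ)-1-2 = (n:ℤ)-3 by ring, show (n:ℤ)-1-1 = (n:ℤ)-2 by ring,
          show (n:ℤ)-1+1 = (n:ℤ) by ring, show (n:ℤ)-1+2 = (n:ℤ)+1 by ring,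
          g_none n c (by omega : (n:ℤ) < 0 ∨ (n:ℤ) ≤ (n:ℤ)),
          g_none n c (by omega : (n:ℤ)+1 < 0 ∨ (n:ℤ) ≤ (n:ℤ)+1)]
      rw [h1, h2]
    rw [hacc]
    constructor
    · intro h k
      rcases (Bool.and_eq_true _ _).mp h with ⟨ha, hb⟩
      by_cases hk1 : k ≤ (n:ℤ) - 3
      · exact hP k hk1
      · by_cases hk2 : k = (n:ℤ) - 2
        · rw [hk2]; exact ha
        · by_cases hk3 : k = (n:ℤ) - 1
          · rw [hk3]; exact hb
          · exact condZ_out n c (by omega)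
    · intro h
      rw [h ((n:ℤ)-2), h ((n:ℤ)-1)]
      rfl
  · rw [if_neg hP]
    constructor
    · intro h; exact absurd h (by simp [acceptb])
    · intro h
      exact absurd (fun k _ => h k) hP

lemma mem_closedNbhd {V : Type*} (G : SimpleGraph V) (S : Set V) (u : V) :
    u ∈ closedNbhd G S ↔ ∃ s ∈ S, u = s ∨ G.Adj s u := by
  unfold closedNbhd
  simp only [Set.mem_iUnion, Set.mem_insert_iff, SimpleGraph.mem_neighborSet, exists_prop]

lemma digConvex_iff {V : Type*} (G : SimpleGraph V) (S : Set V) :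
    DigConvex G S ↔ ∀ v, v ∈ S ∨ ∃ u, (u = v ∨ G.Adj v u) ∧
      ∀ w, (w = u ∨ G.Adj u w) → w ∉ S := by
  unfold DigConvex
  constructor
  · intro h v
    by_cases hv : v ∈ S
    · exact Or.inl hv
    · right
      have hns : ¬ (insert v (G.neighborSet v) ⊆ closedNbhd G S) :=
        fun hsub => hv (h v hsub)
      rw [Set.not_subset] at hns
      obtain ⟨u, hu1, hu2⟩ := hns
      refine ⟨u, ?_, ?_⟩
      · rcases Set.mem_insert_iff.mp hu1 with h1 | h1
        · exact Or.inl h1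
        · exact Or.inr h1
      · intro w hw hwS
        apply hu2
        rw [mem_closedNbhd]
        refine ⟨w, hwS, ?_⟩
        rcases hw with h1 | h1
        · exact Or.inl h1.symm
        · exact Or.inr (G.adj_symm h1)
  · intro h v hsub
    rcases h v with hv | ⟨u, hu1, hu2⟩
    · exact hv
    · exfalso
      have hmem : u ∈ insert v (G.neighborSet v) := by
        rcases hu1 with h1 | h1
        · exact Set.mem_insert_iff.mpr (Or.inl h1)
        · exact Set.mem_insert_iff.mpr (Or.inr h1)
      have hcn := hsub hmem
      rw [mem_closedNbhd] at hcn
      obtain ⟨s, hsS, hs⟩ := hcn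
      refine hu2 s ?_ hsS
      rcases hs with h1 | h1
      · exact Or.inl h1.symm
      · exact Or.inr (G.adj_symm h1)

lemma pathG_adj {n : ℕ} (a b : Fin n) :
    (pathG n).Adj a b ↔ ((a:ℕ)+1 = (b:ℕ) ∨ (b:ℕ)+1 = (a:ℕ)) := by
  unfold pathG
  rw [SimpleGraph.fromRel_adj]
  constructor
  · rintro ⟨-, h⟩; exact h
  · intro h
    refine ⟨?_, h⟩
    rintro rfl
    omega

lemma path2_adj (a b : Fin 2) : (pathG 2).Adj a b ↔ a ≠ b := by
  rw [pathG_adj]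
  constructor
  · rintro h rfl; omega
  · intro h
    have hv : (a:ℕ) ≠ (b:ℕ) := fun hh => h (Fin.ext hh)
    have ha := a.isLt
    have hb := b.isLt
    omega

lemma ladder_adj {n : ℕ} (v w : Fin n × Fin 2) :
    (pathG n □ pathG 2).Adj v w ↔
      (((v.1:ℕ)+1 = (w.1:ℕ) ∨ (w.1:ℕ)+1 = (v.1:ℕ)) ∧ v.2 = w.2) ∨
        (v.1 = w.1 ∧ v.2 ≠ w.2) := by
  rw [SimpleGraph.boxProd_adj, pathG_adj, path2_adj]
  tauto

def eSet (n : ℕ) (c : Fin n → C) : Set (Fin n × Fin 2) := {v | c v.1 v.2 = true}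

def Blk (n : ℕ) (c : Fin n → C) (u : Fin n × Fin 2) : Prop :=
  ∀ w, (w = u ∨ (pathG n □ pathG 2).Adj u w) → w ∉ eSet n c

def BB (n : ℕ) (c : Fin n → C) (K : ℤ) (l : Fin 2) : Prop :=
  ∃ k : Fin n, ((k:ℕ):ℤ) = K ∧ Blk n c (k, l)

end NDAux

namespace NDAux

lemma jnot_ne : ∀ j : Fin 2, j ≠ jnot j := by decide

lemma eq_jnot_of_ne : ∀ a b : Fin 2, a ≠ b → b = jnot a := by decide

lemma getb_g_false_iff (n : ℕ) (c : Fin n → C) (K : ℤ) (l : Fin 2) :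
    getb (g n c K) l = false ↔ ∀ k : Fin n, ((k:ℕ):ℤ) = K → c k l = false := by
  by_cases hK : 0 ≤ K ∧ K < (n:ℤ)
  · set k0 : Fin n := ⟨K.toNat, by omega⟩ with hk0def
    have hval : ((k0:ℕ):ℤ) = K := by
      simp only [hk0def]
      omega
    have hgK : g n c K = some (c k0) := by
      rw [← hval, g_coe]
    rw [hgK]
    show c k0 l = false ↔ _
    constructor
    · intro h k hk
      have hkk : k = k0 := by
        apply Fin.ext
        omega
      rw [hkk]; exact h
    · intro h; exact h k0 hval
  · rw [g_none n c (by omega)]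
    show false = false ↔ _
    constructor
    · intro _ k hk
      exfalso
      have h1 := k.isLt
      omega
    · intro _; rfl

lemma isEmpty_iff : ∀ (d : C) (l : Fin 2),
    (isEmptyC d = true ↔ (d l = false ∧ d (jnot l) = false)) := by decide

lemma notmem_eSet {n : ℕ} {c : Fin n → C} {k : Fin n} {l : Fin 2}
    (h : (k, l) ∉ eSet n c) : c k l = false :=
  Bool.eq_false_iff.mpr (fun hh => h hh)

lemma free_iff (n : ℕ) (c : Fin n → C) (K : ℤ) (l : Fin 2) :
    freeO (g n c (K-1)) (g n c K) (g n c (K+1)) l = true ↔ BB n c K l := by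
  by_cases hK : 0 ≤ K ∧ K < (n:ℤ)
  · set k0 : Fin n := ⟨K.toNat, by omega⟩ with hk0def
    have hval : ((k0:ℕ):ℤ) = K := by
      simp only [hk0def]
      omega
    have hgK : g n c K = some (c k0) := by rw [← hval, g_coe]
    rw [hgK]
    show (isEmptyC (c k0) && !getb (g n c (K-1)) l && !getb (g n c (K+1)) l) = true ↔ _
    rw [Bool.and_eq_true, Bool.and_eq_true, Bool.not_eq_true', Bool.not_eq_true',
      isEmpty_iff (c k0) l, getb_g_false_iff, getb_g_false_iff]
    constructor
    · rintro ⟨⟨⟨h1, h2⟩, hL⟩, hR⟩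
      refine ⟨k0, hval, ?_⟩
      rintro ⟨w1, w2⟩ (hw | hw) hmem
      · rw [Prod.mk.injEq] at hw
        have hmem' : c w1 w2 = true := hmem
        rw [hw.1, hw.2, h1] at hmem'
        exact Bool.false_ne_true hmem'
      · rw [ladder_adj] at hw
        dsimp only at hw
        have hmem' : c w1 w2 = true := hmem
        rcases hw with ⟨hor, heq⟩ | ⟨heq, hne⟩
        · rw [← heq] at hmem'
          rcases hor with h | h
          · rw [hR w1 (by omega)] at hmem'
            exact Bool.false_ne_true hmem'
          · rw [hL w1 (by omega)] at hmem'
            exact Bool.false_ne_true hmem'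
        · have hw2 : w2 = jnot l := eq_jnot_of_ne l w2 hne
          rw [hw2, ← heq, h2] at hmem'
          exact Bool.false_ne_true hmem'
    · rintro ⟨k, hk, hblk⟩
      have hkk : k = k0 := by apply Fin.ext; omega
      rw [hkk] at hblk
      refine ⟨⟨⟨?_, ?_⟩, ?_⟩, ?_⟩
      · exact notmem_eSet (hblk (k0, l) (Or.inl rfl))
      · refine notmem_eSet (hblk (k0, jnot l) (Or.inr ?_))
        rw [ladder_adj]
        right
        exact ⟨rfl, jnot_ne l⟩
      · intro w1 hw1
        refine notmem_eSet (hblk (w1, l) (Or.inr ?_))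
        rw [ladder_adj]
        dsimp only
        left
        exact ⟨by omega, rfl⟩
      · intro w1 hw1
        refine notmem_eSet (hblk (w1, l) (Or.inr ?_))
        rw [ladder_adj]
        dsimp only
        left
        exact ⟨by omega, rfl⟩
  · have hgK : g n c K = none := g_none n c (by omega)
    rw [hgK]
    show false = true ↔ _
    constructor
    · intro h; exact absurd h Bool.false_ne_true
    · rintro ⟨k, hk, -⟩
      exfalso
      have := k.isLt
      omega


lemma check5_some (m2 m1 : OC) (d : C) (p1 p2 : OC) :
    check5 m2 m1 (some d) p1 p2 = (goodj m2 m1 d p1 p2 0 && goodj m2 m1 d p1 p2 1) := rfl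

lemma goodj_iff (n : ℕ) (c : Fin n → C) (p : Fin n) (j : Fin 2) :
    goodj (g n c (((p:ℕ):ℤ)-2)) (g n c (((p:ℕ):ℤ)-1)) (c p) (g n c (((p:ℕ):ℤ)+1))
        (g n c (((p:ℕ):ℤ)+2)) j = true ↔
      (c p j = true ∨ BB n c (((p:ℕ):ℤ)-1) j ∨ BB n c ((p:ℕ):ℤ) j ∨
        BB n c ((p:ℕ):ℤ) (jnot j) ∨ BB n c (((p:ℕ):ℤ)+1) j) := by
  unfold goodj
  have e1 : freeO (g n c (((p:ℕ):ℤ)-2)) (g n c (((p:ℕ):ℤ)-1)) (some (c p)) j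
      = freeO (g n c ((((p:ℕ):ℤ)-1)-1)) (g n c (((p:ℕ):ℤ)-1)) (g n c ((((p:ℕ):ℤ)-1)+1)) j := by
    rw [show (((p:ℕ):ℤ)-1)-1 = ((p:ℕ):ℤ)-2 by ring, show (((p:ℕ):ℤ)-1)+1 = ((p:ℕ):ℤ) by ring,
      g_coe]
  have e2 : ∀ l, freeO (g n c (((p:ℕ):ℤ)-1)) (some (c p)) (g n c (((p:ℕ):ℤ)+1)) l
      = freeO (g n c (((p:ℕ):ℤ)-1)) (g n c ((p:ℕ):ℤ)) (g n c (((p:ℕ):ℤ)+1)) l := by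
    intro l
    rw [g_coe]
  have e3 : freeO (some (c p)) (g n c (((p:ℕ):ℤ)+1)) (g n c (((p:ℕ):ℤ)+2)) j
      = freeO (g n c ((((p:ℕ):ℤ)+1)-1)) (g n c (((p:ℕ):ℤ)+1)) (g n c ((((p:ℕ):ℤ)+1)+1)) j := by
    rw [show (((p:ℕ):ℤ)+1)-1 = ((p:ℕ):ℤ) by ring, show (((p:ℕ):ℤ)+1)+1 = ((p:ℕ):ℤ)+2 by ring,
      g_coe]
  rw [e1, e2 j, e2 (jnot j), e3]
  rw [show (((p:ℕ):ℤ)-1) = (((p:ℕ):ℤ)-1) from rfl]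
  rw [Bool.or_eq_true, Bool.or_eq_true, Bool.or_eq_true, Bool.or_eq_true]
  rw [free_iff, free_iff, free_iff, free_iff]
  have hm : ((p:ℕ):ℤ) = (((p:ℕ):ℤ)-1)+1 := by ring
  constructor
  · tauto
  · tauto

lemma res_iff (n : ℕ) (c : Fin n → C) (p : Fin n) (j : Fin 2) :
    (∃ u, (u = (p,j) ∨ (pathG n □ pathG 2).Adj (p,j) u) ∧ Blk n c u) ↔
      (BB n c (((p:ℕ):ℤ)-1) j ∨ BB n c ((p:ℕ):ℤ) j ∨ BB n c ((p:ℕ):ℤ) (jnot j) ∨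
        BB n c (((p:ℕ):ℤ)+1) j) := by
  constructor
  · rintro ⟨⟨u1, u2⟩, hu | hu, hblk⟩
    · rw [Prod.mk.injEq] at hu
      right; left
      refine ⟨p, rfl, ?_⟩
      rw [hu.1, hu.2] at hblk
      exact hblk
    · rw [ladder_adj] at hu
      dsimp only at hu
      rcases hu with ⟨hor, heq⟩ | ⟨heq, hne⟩
      · rw [← heq] at hblk
        rcases hor with h | h
        · right; right; right
          exact ⟨u1, by omega, hblk⟩
        · left
          exact ⟨u1, by omega, hblk⟩
      · right; right; left
        have hu2 : u2 = jnot j := eq_jnot_of_ne j u2 hne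
        rw [hu2] at hblk
        rw [← heq] at hblk
        exact ⟨p, rfl, hblk⟩
  · rintro (⟨k, hk, hblk⟩ | ⟨k, hk, hblk⟩ | ⟨k, hk, hblk⟩ | ⟨k, hk, hblk⟩)
    · refine ⟨(k, j), Or.inr ?_, hblk⟩
      rw [ladder_adj]
      dsimp only
      left
      exact ⟨by omega, rfl⟩
    · have hkp : k = p := Fin.ext (by omega)
      rw [hkp] at hblk
      exact ⟨(p, j), Or.inl rfl, hblk⟩
    · have hkp : k = p := Fin.ext (by omega)
      rw [hkp] at hblk
      refine ⟨(p, jnot j), Or.inr ?_, hblk⟩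
      rw [ladder_adj]
      right
      exact ⟨rfl, jnot_ne j⟩
    · refine ⟨(k, j), Or.inr ?_, hblk⟩
      rw [ladder_adj]
      dsimp only
      left
      exact ⟨by omega, rfl⟩

lemma condZ_coe_iff (n : ℕ) (c : Fin n → C) (p : Fin n) :
    condZ n c ((p:ℕ):ℤ) = true ↔
      ∀ j : Fin 2, ((p,j) ∈ eSet n c ∨
        ∃ u, (u = (p,j) ∨ (pathG n □ pathG 2).Adj (p,j) u) ∧ Blk n c u) := by
  unfold condZ
  rw [g_coe, check5_some, Bool.and_eq_true, Fin.forall_fin_two]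
  exact and_congr
    ((goodj_iff n c p 0).trans (or_congr Iff.rfl (res_iff n c p 0).symm))
    ((goodj_iff n c p 1).trans (or_congr Iff.rfl (res_iff n c p 1).symm))

lemma main_iff (n : ℕ) (c : Fin n → C) :
    DigConvex (pathG n □ pathG 2) (eSet n c) ↔ ∀ k : ℤ, condZ n c k = true := by
  rw [digConvex_iff]
  constructor
  · intro h k
    by_cases hk : 0 ≤ k ∧ k < (n:ℤ)
    · set p : Fin n := ⟨k.toNat, by omega⟩ with hpdef
      have hp : k = ((p:ℕ):ℤ) := by
        simp only [hpdef]
        omega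
      rw [hp, condZ_coe_iff]
      intro j
      exact h (p, j)
    · exact condZ_out n c (by omega)
  · intro h v
    obtain ⟨p, j⟩ := v
    exact (condZ_coe_iff n c p).mp (h ((p:ℕ):ℤ)) j


lemma nD_eq (n : ℕ) : nD (pathG n □ pathG 2) = Ac n q0 := by
  classical
  rw [← A_eq n q0]
  unfold nD A
  apply Nat.card_congr
  refine ⟨fun S => ⟨fun i j => decide ((i,j) ∈ S.1), ?_⟩,
          fun c => ⟨eSet n c.1, (main_iff n c.1).mpr ((accept_iff n c.1).mp c.2)⟩, ?_, ?_⟩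
  · have hE : eSet n (fun i j => decide ((i,j) ∈ S.1)) = S.1 := by
      ext ⟨i, j⟩
      simp [eSet]
    exact (accept_iff n _).mpr ((main_iff n _).mp (by rw [hE]; exact S.2))
  · rintro ⟨S, hS⟩
    apply Subtype.ext
    show eSet n (fun i j => decide ((i,j) ∈ S)) = S
    ext ⟨i, j⟩
    simp [eSet]
  · rintro ⟨c, hc⟩
    apply Subtype.ext
    show (fun i j => decide ((i,j) ∈ eSet n c)) = c
    funext i j
    simp [eSet]
    by_cases h : c i j = true <;> simp [h]

end NDAux

theorem nD_path_boxProd_P2 :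
    nD (pathG 1 □ pathG 2) = 2 ∧ nD (pathG 2 □ pathG 2) = 6 ∧
      nD (pathG 3 □ pathG 2) = 16 ∧
      ∀ n : ℕ, 4 ≤ n →
        nD (pathG n □ pathG 2) =
          nD (pathG (n - 1) □ pathG 2) + 3 * nD (pathG (n - 2) □ pathG 2)
            + 2 * nD (pathG (n - 3) □ pathG 2) := by
  refine ⟨?_, ?_, ?_, ?_⟩
  · rw [NDAux.nD_eq]; decide
  · rw [NDAux.nD_eq]; decide
  · rw [NDAux.nD_eq]; decide
  · intro n hn
    obtain ⟨m, rfl⟩ : ∃ m, n = m + 4 := ⟨n - 4, by omega⟩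
    rw [show m+4-1 = m+3 by omega, show m+4-2 = m+2 by omega, show m+4-3 = m+1 by omega,
      NDAux.nD_eq, NDAux.nD_eq, NDAux.nD_eq, NDAux.nD_eq]
    exact NDAux.rec4 m NDAux.q0
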